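/- If x* ∈ X satisfies SP-RCPLD, then x* is AS-regular. -/

import Mathlib

open Filter Topology

noncomputable section

/-- Euclidean n-space. -/
abbrev E (n : ℕ) : Type := EuclideanSpace ℝ (Fin n)

/-- The full family of "tightened" gradient vectors at x:
all ∇h_i(x) together with the unit vectors e_i for i ∈ I₀(x*). -/
def tightFam {n q : ℕ} (h : Fin q → E n → ℝ) (xstar : E n) (x : E n) : Set (E n) :=
  {v | ∃ j, v = gradient (h j) x} ∪
    {v | ∃ i, xstar i = 0 ∧ v = (EuclideanSpace.single i (1 : ℝ) : E n)}

/-- The rank of the family `tightFam` at x. -/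
def tightRank {n q : ℕ} (h : Fin q → E n → ℝ) (xstar : E n) (x : E n) : ℕ :=
  Module.finrank ℝ ↥(Submodule.span ℝ (tightFam h xstar x))

/-- SP-RCPLD at x*. -/
def SPRCPLD {n m q : ℕ} (g : Fin m → E n → ℝ) (h : Fin q → E n → ℝ)
    (xstar : E n) : Prop :=
  ∃ U ∈ 𝓝 xstar,
    -- (i) constant rank of {∇h_i(x)} ∪ {e_i : i ∈ I₀(x*)} on U
    (∀ x ∈ U, tightRank h xstar x = tightRank h xstar xstar) ∧
    -- (ii) for all basis index sets I₁ ⊆ {1,…,q}, I₂ ⊆ I₀(x*) ...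
    ∀ (I₁ : Finset (Fin q)) (I₂ : Finset (Fin n)),
      (∀ i ∈ I₂, xstar i = 0) →
      LinearIndependent ℝ (fun j : (↥I₁ ⊕ ↥I₂) =>
        Sum.elim (fun i : ↥I₁ => gradient (h i.1) xstar)
          (fun i : ↥I₂ => (EuclideanSpace.single i.1 (1 : ℝ) : E n)) j) →
      Submodule.span ℝ
          ((fun i => gradient (h i) xstar) '' ↑I₁ ∪
            (fun i : Fin n => (EuclideanSpace.single i (1 : ℝ) : E n)) '' ↑I₂) =
        Submodule.span ℝ (tightFam h xstar xstar) →
      -- ... and every J ⊆ I_g(x*):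
      ∀ J : Finset (Fin m), (∀ i ∈ J, g i xstar = 0) →
        -- positive-linear dependence at x* ...
        (∃ (mu : Fin q → ℝ) (gam : Fin n → ℝ) (lam : Fin m → ℝ),
          (∀ i, 0 ≤ lam i) ∧
          (∀ i, i ∉ I₁ → mu i = 0) ∧ (∀ i, i ∉ I₂ → gam i = 0) ∧
          (∀ i, i ∉ J → lam i = 0) ∧
          ¬(mu = 0 ∧ gam = 0 ∧ lam = 0) ∧
          (∑ i, mu i • gradient (h i) xstar) +
            (∑ i, gam i • (EuclideanSpace.single i (1 : ℝ) : E n)) +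
            (∑ i, lam i • gradient (g i) xstar) = 0) →
        -- ... implies linear dependence on all of U:
        ∀ x ∈ U, ¬ LinearIndependent ℝ (fun j : (↥I₁ ⊕ ↥I₂ ⊕ ↥J) =>
          Sum.elim (fun i : ↥I₁ => gradient (h i.1) x)
            (Sum.elim (fun i : ↥I₂ => (EuclideanSpace.single i.1 (1 : ℝ) : E n))
              (fun i : ↥J => gradient (g i.1) x)) j)

/-- The cone K(x) (relative to the fixed point x*). -/
def Kcone {n m q : ℕ} (g : Fin m → E n → ℝ) (h : Fin q → E n → ℝ)
    (xstar : E n) (x : E n) : Set (E n) :=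
  {d | ∃ (mu : Fin q → ℝ) (lam : Fin m → ℝ),
    (∀ i, 0 ≤ lam i) ∧ (∀ i, g i xstar ≠ 0 → lam i = 0) ∧
    ∀ j, xstar j ≠ 0 →
      d j = (∑ i, mu i * gradient (h i) x j) + ∑ i, lam i * gradient (g i) x j}

/-- AS-regularity: outer semicontinuity of K(·) at x*. -/
def ASRegular {n m q : ℕ} (g : Fin m → E n → ℝ) (h : Fin q → E n → ℝ)
    (xstar : E n) : Prop :=
  ∀ (xk dk : ℕ → E n) (d : E n),
    Tendsto xk atTop (𝓝 xstar) → Tendsto dk atTop (𝓝 d) →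
    (∀ k, dk k ∈ Kcone g h xstar (xk k)) → d ∈ Kcone g h xstar xstar

/-! ### Auxiliary lemmas -/

lemma grad_cont {n : ℕ} {f : E n → ℝ} (hf : ContDiff ℝ 1 f) : Continuous (gradient f) := by
  have h1 : Continuous (fderiv ℝ f) := hf.continuous_fderiv one_ne_zero
  exact ((InnerProductSpace.toDual ℝ (E n)).symm.continuous).comp h1

lemma sum_subtype_ext {κ M : Type*} [Fintype κ] [AddCommMonoid M] (s : Finset κ)
    (f : κ → M) (hf : ∀ i ∉ s, f i = 0) : ∑ i : ↥s, f i.1 = ∑ i, f i := by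
  rw [Finset.sum_coe_sort s f]
  exact Finset.sum_subset (Finset.subset_univ s) (fun x _ hx => hf x hx)

lemma sum_coord {n : ℕ} {κ : Type*} [Fintype κ] (v : κ → E n) (a : κ → ℝ) (j : Fin n) :
    (∑ i, a i • v i) j = ∑ i, a i * v i j := by
  rw [WithLp.ofLp_sum, Finset.sum_apply j Finset.univ (fun i => (a i • v i).ofLp)]
  rfl

lemma single_inj {n : ℕ} {i j : Fin n}
    (hij : (EuclideanSpace.single i (1:ℝ) : E n) = EuclideanSpace.single j (1:ℝ)) : i = j := by
  by_contra hne
  have := congrArg (fun v : E n => v i) hij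
  classical
  simp [EuclideanSpace.single_apply, hne] at this

/-- Carathéodory-type reduction for conic combinations relative to a
linearly independent family. -/
lemma cara {nn mm : ℕ} {ι : Type} [Fintype ι] (b : ι → E nn) (v : Fin mm → E nn)
    (hb : LinearIndependent ℝ b) (S : Finset (Fin mm)) :
    ∀ (N : ℕ) (J : Finset (Fin mm)), J.card ≤ N → J ⊆ S →
    ∀ (c : ι → ℝ) (lam : Fin mm → ℝ),
    (∀ i, 0 ≤ lam i) → (∀ i, i ∉ J → lam i = 0) →
    ∃ (J' : Finset (Fin mm)) (c' : ι → ℝ) (lam' : Fin mm → ℝ),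
      J' ⊆ S ∧ (∀ i, 0 ≤ lam' i) ∧ (∀ i, i ∉ J' → lam' i = 0) ∧
      ((∑ i, c' i • b i) + ∑ i, lam' i • v i = (∑ i, c i • b i) + ∑ i, lam i • v i) ∧
      LinearIndependent ℝ (Sum.elim b (fun j : ↥J' => v j.1)) := by
  intro N
  induction N with
  | zero =>
    intro J hJcard hJS c lam hl hls
    have hJ : J = ∅ := Finset.card_eq_zero.mp (Nat.le_zero.mp hJcard)
    subst hJ
    refine ⟨∅, c, lam, Finset.empty_subset _, hl, hls, rfl, ?_⟩
    refine (linearIndependent_sum).mpr ⟨hb, linearIndependent_empty_type, ?_⟩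
    have : Set.range (fun j : ↥(∅ : Finset (Fin mm)) => v j.1) = ∅ := by
      simp [Set.range_eq_empty]
    simp [this]
  | succ N ih =>
    intro J hJcard hJS c lam hl hls
    by_cases hli : LinearIndependent ℝ (Sum.elim b (fun j : ↥J => v j.1))
    · exact ⟨J, c, lam, hJS, hl, hls, rfl, hli⟩
    obtain ⟨gg, hgg0, i₀, hgi₀⟩ := Fintype.not_linearIndependent_iff.mp hli
    classical
    set α : ι → ℝ := fun i => gg (.inl i) with hα
    set β : Fin mm → ℝ := fun i => if hi : i ∈ J then gg (.inr ⟨i, hi⟩) else 0 with hβ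
    have hβsupp : ∀ i, i ∉ J → β i = 0 := fun i hi => by simp [hβ, hi]
    have hsumβ : ∑ i, β i • v i = ∑ j : ↥J, gg (.inr j) • v j.1 := by
      have h1 : ∑ i ∈ J, β i • v i = ∑ i : Fin mm, β i • v i :=
        Finset.sum_subset (Finset.subset_univ J)
          (fun x _ hx => by rw [hβsupp x hx, zero_smul])
      rw [← h1, ← Finset.sum_coe_sort J (fun i => β i • v i)]
      exact Finset.sum_congr rfl fun j _ => by simp [hβ, j.2]
    have hrel0 : (∑ i, α i • b i) + ∑ i, β i • v i = 0 := by
      rw [Fintype.sum_sum_type] at hgg0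
      simp only [Sum.elim_inl, Sum.elim_inr] at hgg0
      rw [hsumβ]
      exact hgg0
    have hβne : ∃ i, β i ≠ 0 := by
      by_contra hβ0
      push_neg at hβ0
      have hz : ∑ i, β i • v i = 0 := by
        simp only [hβ0, zero_smul, Finset.sum_const_zero]
      rw [hz, add_zero] at hrel0
      have hα0 : ∀ i, α i = 0 := Fintype.linearIndependent_iff.mp hb α hrel0
      cases i₀ with
      | inl i => exact hgi₀ (hα0 i)
      | inr j => exact hgi₀ (by have := hβ0 j.1; simpa [hβ, j.2] using this)
    have key : ∃ (α' : ι → ℝ) (β' : Fin mm → ℝ), (∀ i, i ∉ J → β' i = 0) ∧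
        ((∑ i, α' i • b i) + ∑ i, β' i • v i = 0) ∧ ∃ i, 0 < β' i := by
      obtain ⟨i, hi⟩ := hβne
      rcases lt_or_gt_of_ne hi with hneg | hpos
      · refine ⟨-α, -β, fun i hi' => by simp [hβsupp i hi'], ?_, ⟨i, by simpa using hneg⟩⟩
        have := hrel0
        simp only [Pi.neg_apply, neg_smul, Finset.sum_neg_distrib]
        rw [← neg_add, this, neg_zero]
      · exact ⟨α, β, hβsupp, hrel0, ⟨i, hpos⟩⟩
    obtain ⟨α', β', hβ'supp, hrel, i₁, hi₁⟩ := key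
    set T := J.filter (fun i => 0 < β' i) with hT
    have hi₁J : i₁ ∈ J := by
      by_contra hcon
      rw [hβ'supp i₁ hcon] at hi₁
      exact lt_irrefl 0 hi₁
    have hTne : T.Nonempty := ⟨i₁, Finset.mem_filter.mpr ⟨hi₁J, hi₁⟩⟩
    obtain ⟨i₂, hi₂T, hmin⟩ := T.exists_min_image (fun i => lam i / β' i) hTne
    have hi₂J : i₂ ∈ J := (Finset.mem_filter.mp hi₂T).1
    have hβi₂ : 0 < β' i₂ := (Finset.mem_filter.mp hi₂T).2
    set t := lam i₂ / β' i₂ with htdef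
    have ht0 : 0 ≤ t := div_nonneg (hl i₂) hβi₂.le
    set lam2 : Fin mm → ℝ := fun i => lam i - t * β' i with hlam2def
    have hlam2 : ∀ i, 0 ≤ lam2 i := by
      intro i
      by_cases hbi : 0 < β' i
      · have hiJ : i ∈ J := by
          by_contra hcon; rw [hβ'supp i hcon] at hbi; exact lt_irrefl 0 hbi
        have := hmin i (Finset.mem_filter.mpr ⟨hiJ, hbi⟩)
        have : t * β' i ≤ lam i := by
          rw [← le_div_iff₀ hbi]; exact this
        simp [hlam2def]; linarith
      · push_neg at hbi
        have : t * β' i ≤ 0 := mul_nonpos_of_nonneg_of_nonpos ht0 hbi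
        have := hl i
        simp [hlam2def]; linarith
    have hlam2supp : ∀ i, i ∉ J.erase i₂ → lam2 i = 0 := by
      intro i hi
      rw [Finset.mem_erase] at hi
      push_neg at hi
      by_cases h2 : i ∈ J
      swap
      · simp [hlam2def, hls i h2, hβ'supp i h2]
      have h1 : i = i₂ := by by_contra hne; exact hi hne h2
      subst h1
      simp [hlam2def, htdef]
      field_simp
      ring
    set c2 : ι → ℝ := fun i => c i - t * α' i with hc2def
    have hcard2 : (J.erase i₂).card ≤ N := by
      have := Finset.card_erase_of_mem hi₂J
      omega
    obtain ⟨J', c', lam', hJ'S, hl', hls', hsum', hli'⟩ :=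
      ih (J.erase i₂) hcard2 ((Finset.erase_subset _ _).trans hJS) c2 lam2 hlam2 hlam2supp
    refine ⟨J', c', lam', hJ'S, hl', hls', ?_, hli'⟩
    rw [hsum']
    have e1 : ∑ i, c2 i • b i = ∑ i, c i • b i - t • ∑ i, α' i • b i := by
      rw [Finset.smul_sum, ← Finset.sum_sub_distrib]
      exact Finset.sum_congr rfl fun i _ => by rw [hc2def]; rw [sub_smul, smul_smul]
    have e2 : ∑ i, lam2 i • v i = ∑ i, lam i • v i - t • ∑ i, β' i • v i := by
      rw [Finset.smul_sum, ← Finset.sum_sub_distrib]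
      exact Finset.sum_congr rfl fun i _ => by rw [hlam2def]; rw [sub_smul, smul_smul]
    rw [e1, e2]
    have hz : (∑ i, α' i • b i) + ∑ i, β' i • v i = 0 := hrel
    have h2 : t • ((∑ i, α' i • b i) + ∑ i, β' i • v i) = 0 := by rw [hz, smul_zero]
    rw [smul_add] at h2
    abel_nf
    abel_nf at h2
    linear_combination (norm := abel) -h2

/-- Selection of a basis of `span (tightFam h xstar xstar)` indexed by
subsets `I₁ ⊆ Fin q` and `I₂ ⊆ I₀(x*)`. -/
lemma exists_basis_sel {n q : ℕ} (h : Fin q → E n → ℝ) (xstar : E n) :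
    ∃ (I₁ : Finset (Fin q)) (I₂ : Finset (Fin n)),
      (∀ i ∈ I₂, xstar i = 0) ∧
      LinearIndependent ℝ (fun j : (↥I₁ ⊕ ↥I₂) =>
        Sum.elim (fun i : ↥I₁ => gradient (h i.1) xstar)
          (fun i : ↥I₂ => (EuclideanSpace.single i.1 (1:ℝ) : E n)) j) ∧
      Submodule.span ℝ
          ((fun i => gradient (h i) xstar) '' ↑I₁ ∪
            (fun i : Fin n => (EuclideanSpace.single i (1:ℝ) : E n)) '' ↑I₂) =
        Submodule.span ℝ (tightFam h xstar xstar) := by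
  classical
  obtain ⟨s, hs_sub, hs_span, hs_li⟩ := exists_linearIndependent ℝ (tightFam h xstar xstar)
  set gr : Fin q → E n := fun i => gradient (h i) xstar with hgr
  set s₂ : Set (E n) := {v ∈ s | ∃ i, xstar i = 0 ∧ v = EuclideanSpace.single i (1:ℝ)} with hs₂
  set s₁ : Set (E n) := s \ s₂ with hs₁
  set I₂ : Finset (Fin n) := Finset.univ.filter
      (fun i => xstar i = 0 ∧ (EuclideanSpace.single i (1:ℝ) : E n) ∈ s) with hI₂
  set I₁ : Finset (Fin q) := Finset.univ.filter
      (fun i => gr i ∈ s₁ ∧ ∀ i', i' < i → gr i' ≠ gr i) with hI₁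
  have hI₂0 : ∀ i ∈ I₂, xstar i = 0 := fun i hi => ((Finset.mem_filter.mp hi).2).1
  have him₂ : (fun i : Fin n => (EuclideanSpace.single i (1:ℝ) : E n)) '' ↑I₂ = s₂ := by
    ext v
    constructor
    · rintro ⟨i, hi, rfl⟩
      obtain ⟨hx0, hvs⟩ := (Finset.mem_filter.mp hi).2
      exact ⟨hvs, i, hx0, rfl⟩
    · rintro ⟨hvs, i, hx0, rfl⟩
      exact ⟨i, Finset.mem_filter.mpr ⟨Finset.mem_univ i, hx0, hvs⟩, rfl⟩
  have him₁ : gr '' ↑I₁ = s₁ := by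
    ext v
    constructor
    · rintro ⟨i, hi, rfl⟩
      exact ((Finset.mem_filter.mp hi).2).1
    · intro hv
      have hex : ∃ i, gr i = v := by
        have hvt : v ∈ tightFam h xstar xstar := hs_sub hv.1
        rcases hvt with ⟨j, hj⟩ | ⟨i, hx0, hv'⟩
        · exact ⟨j, hj.symm⟩
        · exact absurd ⟨hv.1, i, hx0, hv'⟩ hv.2
      set P : Finset (Fin q) := Finset.univ.filter (fun i => gr i = v) with hP
      have hPne : P.Nonempty := by
        obtain ⟨i, hi⟩ := hex
        exact ⟨i, Finset.mem_filter.mpr ⟨Finset.mem_univ i, hi⟩⟩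
      set i₀ := P.min' hPne with hi₀
      have hi₀P : i₀ ∈ P := P.min'_mem hPne
      have hgr₀ : gr i₀ = v := (Finset.mem_filter.mp hi₀P).2
      refine ⟨i₀, Finset.mem_filter.mpr ⟨Finset.mem_univ _, hgr₀ ▸ hv, ?_⟩, hgr₀⟩
      intro i' hi' hcon
      have : i' ∈ P := Finset.mem_filter.mpr ⟨Finset.mem_univ _, by rw [hcon, hgr₀]⟩
      exact absurd (P.min'_le i' this) (not_le.mpr hi')
  set Fam : (↥I₁ ⊕ ↥I₂) → E n := fun j =>
    Sum.elim (fun i : ↥I₁ => gr i.1)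
      (fun i : ↥I₂ => (EuclideanSpace.single i.1 (1:ℝ) : E n)) j with hFam
  have hmem : ∀ j, Fam j ∈ s := by
    rintro (⟨i, hi⟩ | ⟨i, hi⟩)
    · have : gr i ∈ s₁ := ((Finset.mem_filter.mp hi).2).1
      exact this.1
    · exact ((Finset.mem_filter.mp hi).2).2
  have hinj : Function.Injective Fam := by
    rintro (⟨i, hi⟩ | ⟨i, hi⟩) (⟨i', hi'⟩ | ⟨i', hi'⟩) hij
    · simp only [hFam, Sum.elim_inl] at hij
      rcases lt_trichotomy i i' with hlt | heq | hgt
      · exact absurd hij (((Finset.mem_filter.mp hi').2).2 i hlt)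
      · simp [heq]
      · exact absurd hij.symm (((Finset.mem_filter.mp hi).2).2 i' hgt)
    · exfalso
      simp only [hFam, Sum.elim_inl, Sum.elim_inr] at hij
      have h1 : gr i ∈ s₁ := ((Finset.mem_filter.mp hi).2).1
      have h2 : gr i ∈ s₂ := by
        refine ⟨h1.1, i', hI₂0 i' hi', ?_⟩
        exact hij
      exact h1.2 h2
    · exfalso
      simp only [hFam, Sum.elim_inl, Sum.elim_inr] at hij
      have h1 : gr i' ∈ s₁ := ((Finset.mem_filter.mp hi').2).1
      have h2 : gr i' ∈ s₂ := ⟨h1.1, i, hI₂0 i hi, hij.symm⟩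
      exact h1.2 h2
    · simp only [hFam, Sum.elim_inr] at hij
      have := single_inj hij
      simp [this]
  have hli : LinearIndependent ℝ Fam := by
    have hF : Fam = (Subtype.val : s → E n) ∘ (fun j => (⟨Fam j, hmem j⟩ : s)) := rfl
    rw [hF]
    exact hs_li.comp _ (fun a b hab => hinj (by simpa using congrArg Subtype.val hab))
  refine ⟨I₁, I₂, hI₂0, hli, ?_⟩
  rw [him₁, him₂, ← hs_span]
  congr 1
  rw [hs₁]
  ext v
  constructor
  · rintro (⟨hv, _⟩ | hv)
    · exact hv
    · exact hv.1
  · intro hv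
    by_cases hv2 : v ∈ s₂
    · exact Or.inr hv2
    · exact Or.inl ⟨hv, hv2⟩

set_option maxHeartbeats 2000000 in
/-- SP-RCPLD implies AS-regularity. -/
theorem stmt_12 {n m q : ℕ} (hn : 1 ≤ n)
    (g : Fin m → E n → ℝ) (h : Fin q → E n → ℝ)
    (hg : ∀ i, ContDiff ℝ 1 (g i)) (hh : ∀ j, ContDiff ℝ 1 (h j))
    (xstar : E n)
    -- x* ∈ X :
    (hgx : ∀ i, g i xstar ≤ 0) (hhx : ∀ j, h j xstar = 0) (hxnn : ∀ i, 0 ≤ xstar i)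
    (hrcpld : SPRCPLD g h xstar) :
    ASRegular g h xstar := by
  classical
  obtain ⟨U, hU, hrank, hii⟩ := hrcpld
  obtain ⟨I₁, I₂, hI₂0, hliStar, hspanStar⟩ := exists_basis_sel h xstar
  intro xk dk d hxk hdk hdkK
  set F : E n → (↥I₁ ⊕ ↥I₂) → E n := fun x => fun j => Sum.elim
      (fun i : ↥I₁ => gradient (h i.1) x)
      (fun i : ↥I₂ => (EuclideanSpace.single i.1 (1:ℝ) : E n)) j with hF
  set Gg : E n → Fin m → E n := fun x i => gradient (g i) x with hGg
  have hrangeF : ∀ x, Set.range (F x) =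
      (fun i => gradient (h i) x) '' ↑I₁ ∪
        (fun i : Fin n => (EuclideanSpace.single i (1:ℝ) : E n)) '' ↑I₂ := by
    intro x
    show Set.range (Sum.elim (fun i : ↥I₁ => gradient (h i.1) x)
      (fun i : ↥I₂ => (EuclideanSpace.single i.1 (1:ℝ) : E n))) =
      (fun i => gradient (h i) x) '' ↑I₁ ∪
        (fun i : Fin n => (EuclideanSpace.single i (1:ℝ) : E n)) '' ↑I₂
    rw [Set.Sum.elim_range]
    congr 1
    · ext v; constructor
      · rintro ⟨⟨i, hi⟩, rfl⟩; exact ⟨i, hi, rfl⟩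
      · rintro ⟨i, hi, rfl⟩; exact ⟨⟨i, hi⟩, rfl⟩
    · ext v; constructor
      · rintro ⟨⟨i, hi⟩, rfl⟩; exact ⟨i, hi, rfl⟩
      · rintro ⟨i, hi, rfl⟩; exact ⟨⟨i, hi⟩, rfl⟩
  have hliStar' : LinearIndependent ℝ (F xstar) := hliStar
  have hcard : Fintype.card (↥I₁ ⊕ ↥I₂) =
      Module.finrank ℝ ↥(Submodule.span ℝ (tightFam h xstar xstar)) := by
    rw [← hspanStar, ← hrangeF xstar]
    exact (finrank_span_eq_card hliStar').symm
  have hmemF : ∀ x, ∀ j, F x j ∈ tightFam h xstar x := by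
    rintro x (⟨i, hi⟩ | ⟨i, hi⟩)
    · exact Or.inl ⟨i, rfl⟩
    · exact Or.inr ⟨i, hI₂0 i hi, rfl⟩
  have hspanx : ∀ x ∈ U, LinearIndependent ℝ (F x) →
      Submodule.span ℝ (Set.range (F x)) = Submodule.span ℝ (tightFam h xstar x) := by
    intro x hxU hlix
    have hle : Submodule.span ℝ (Set.range (F x)) ≤ Submodule.span ℝ (tightFam h xstar x) :=
      Submodule.span_le.mpr (by rintro v ⟨j, rfl⟩; exact Submodule.subset_span (hmemF x j))
    refine Submodule.eq_of_le_of_finrank_eq hle ?_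
    rw [finrank_span_eq_card hlix]
    have hr := hrank x hxU
    unfold tightRank at hr
    rw [hr, ← hcard]
  have hFcont : Continuous F := by
    apply continuous_pi
    rintro (⟨i, hi⟩ | ⟨i, hi⟩)
    · exact grad_cont (hh i)
    · exact continuous_const
  have hVnhds : ∀ᶠ x in 𝓝 xstar, LinearIndependent ℝ (F x) := by
    have hop : IsOpen {x : E n | LinearIndependent ℝ (F x)} :=
      isOpen_setOf_linearIndependent.preimage hFcont
    exact hop.mem_nhds hliStar'
  have hev : ∀ᶠ k in atTop, xk k ∈ U ∧ LinearIndependent ℝ (F (xk k)) :=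
    (hxk.eventually_mem hU).and (hxk.eventually hVnhds)
  set S : Finset (Fin m) := Finset.univ.filter (fun i => g i xstar = 0) with hS
  -- representation at points of U where F is linearly independent
  have hrep : ∀ k, xk k ∈ U → LinearIndependent ℝ (F (xk k)) →
      ∃ (J : Finset (Fin m)) (c : (↥I₁ ⊕ ↥I₂) → ℝ) (lam : Fin m → ℝ),
        J ⊆ S ∧ (∀ i, 0 ≤ lam i) ∧ (∀ i, i ∉ J → lam i = 0) ∧
        dk k = (∑ i, c i • F (xk k) i) + ∑ i, lam i • Gg (xk k) i ∧
        LinearIndependent ℝ (Sum.elim (F (xk k)) (fun j : ↥J => Gg (xk k) j.1)) := by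
    intro k hkU hkli
    obtain ⟨mu, lam, hlam0, hlamact, hdco⟩ := hdkK k
    set x := xk k with hx
    set w : E n := (∑ i, mu i • gradient (h i) x) + ∑ i, lam i • Gg x i with hw
    set gam : Fin n → ℝ := fun j => if xstar j = 0 then dk k j - w j else 0 with hgam
    have hwj : ∀ j : Fin n, w j =
        (∑ i, mu i * gradient (h i) x j) + ∑ i, lam i * Gg x i j := by
      intro j
      rw [hw]
      show ((∑ i, mu i • gradient (h i) x) : E n) j + ((∑ i, lam i • Gg x i) : E n) j = _
      rw [sum_coord, sum_coord]
    have hsingle : ∀ (γ : Fin n → ℝ) (j : Fin n),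
        ((∑ i, γ i • (EuclideanSpace.single i (1:ℝ) : E n)) : E n) j = γ j := by
      intro γ j
      rw [sum_coord]
      simp [EuclideanSpace.single_apply]
    have hdecomp : dk k = (∑ i, mu i • gradient (h i) x) +
        (∑ j, gam j • (EuclideanSpace.single j (1:ℝ) : E n)) + ∑ i, lam i • Gg x i := by
      ext j
      show dk k j = (((∑ i, mu i • gradient (h i) x) : E n) +
        ((∑ j, gam j • (EuclideanSpace.single j (1:ℝ) : E n)) : E n) +
        ((∑ i, lam i • Gg x i) : E n)) j
      have hrhs : (((∑ i, mu i • gradient (h i) x) : E n) +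
          ((∑ j, gam j • (EuclideanSpace.single j (1:ℝ) : E n)) : E n) +
          ((∑ i, lam i • Gg x i) : E n)) j =
          ((∑ i, mu i • gradient (h i) x) : E n) j + gam j + ((∑ i, lam i • Gg x i) : E n) j := by
        show ((∑ i, mu i • gradient (h i) x) : E n) j +
          ((∑ j, gam j • (EuclideanSpace.single j (1:ℝ) : E n)) : E n) j +
          ((∑ i, lam i • Gg x i) : E n) j = _
        rw [hsingle]
      rw [hrhs]
      by_cases hj : xstar j = 0
      · have : gam j = dk k j - w j := by rw [hgam]; simp [hj]
        rw [this, hwj j]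
        rw [show ((∑ i, mu i • gradient (h i) x) : E n) j = ∑ i, mu i * gradient (h i) x j
          from sum_coord _ _ j]
        rw [show ((∑ i, lam i • Gg x i) : E n) j = ∑ i, lam i * Gg x i j
          from sum_coord _ _ j]
        ring
      · have hg0 : gam j = 0 := by rw [hgam]; simp [hj]
        rw [hg0, hdco j hj]
        rw [show ((∑ i, mu i • gradient (h i) x) : E n) j = ∑ i, mu i * gradient (h i) x j
          from sum_coord _ _ j]
        rw [show ((∑ i, lam i • Gg x i) : E n) j = ∑ i, lam i * Gg x i j
          from sum_coord _ _ j]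
        ring
    set u : E n := (∑ i, mu i • gradient (h i) x) +
        (∑ j, gam j • (EuclideanSpace.single j (1:ℝ) : E n)) with hu
    have humem : u ∈ Submodule.span ℝ (Set.range (F x)) := by
      rw [hspanx x hkU hkli]
      apply Submodule.add_mem
      · apply Submodule.sum_mem
        intro i _
        exact Submodule.smul_mem _ _ (Submodule.subset_span (Or.inl ⟨i, rfl⟩))
      · apply Submodule.sum_mem
        intro j _
        by_cases hj : xstar j = 0
        · exact Submodule.smul_mem _ _ (Submodule.subset_span (Or.inr ⟨j, hj, rfl⟩))
        · rw [show gam j = 0 from by rw [hgam]; simp [hj], zero_smul]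
          exact Submodule.zero_mem _
    obtain ⟨c, hc⟩ := (Submodule.mem_span_range_iff_exists_fun ℝ).mp humem
    have hlamS : ∀ i, i ∉ S → lam i = 0 := by
      intro i hi
      apply hlamact
      intro hgi
      exact hi (Finset.mem_filter.mpr ⟨Finset.mem_univ i, hgi⟩)
    have hScard : S.card ≤ m := by
      simpa using S.card_le_univ
    obtain ⟨J', c', lam', hJ'S, hl', hls', hsum', hli'⟩ :=
      cara (F x) (Gg x) hkli S m S hScard subset_rfl c lam hlam0 hlamS
    refine ⟨J', c', lam', hJ'S, hl', hls', ?_, hli'⟩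
    rw [hsum', hc]
    rw [hdecomp]
  -- pigeonhole on the finitely many index sets J
  have hfreq : ∃ J : Finset (Fin m), ∃ᶠ k in atTop,
      (xk k ∈ U ∧ ∃ (c : (↥I₁ ⊕ ↥I₂) → ℝ) (lam : Fin m → ℝ),
        J ⊆ S ∧ (∀ i, 0 ≤ lam i) ∧ (∀ i, i ∉ J → lam i = 0) ∧
        dk k = (∑ i, c i • F (xk k) i) + ∑ i, lam i • Gg (xk k) i ∧
        LinearIndependent ℝ (Sum.elim (F (xk k)) (fun j : ↥J => Gg (xk k) j.1))) := by
    by_contra hcon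
    simp only [not_exists, Filter.not_frequently] at hcon
    have hall : ∀ᶠ k in atTop, ∀ J : Finset (Fin m),
        ¬ (xk k ∈ U ∧ ∃ (c : (↥I₁ ⊕ ↥I₂) → ℝ) (lam : Fin m → ℝ),
          J ⊆ S ∧ (∀ i, 0 ≤ lam i) ∧ (∀ i, i ∉ J → lam i = 0) ∧
          dk k = (∑ i, c i • F (xk k) i) + ∑ i, lam i • Gg (xk k) i ∧
          LinearIndependent ℝ (Sum.elim (F (xk k)) (fun j : ↥J => Gg (xk k) j.1))) :=
      Filter.eventually_all.mpr hcon
    obtain ⟨k, hk1, hk2⟩ := (hev.and hall).exists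
    obtain ⟨J, c, lam, hJS, hl, hls, hsum, hli⟩ := hrep k hk1.1 hk1.2
    exact hk2 J ⟨hk1.1, c, lam, hJS, hl, hls, hsum, hli⟩
  obtain ⟨J₀, hfr⟩ := hfreq
  obtain ⟨φ, hφmono, hφ⟩ := extraction_of_frequently_atTop hfr
  have hU' : ∀ k, xk (φ k) ∈ U := fun k => (hφ k).1
  choose cseq lamseq hJ₀Sall hlam0 hlamsupp hsum hli using fun k => (hφ k).2
  have hJ₀S : J₀ ⊆ S := hJ₀Sall 0
  have hJ₀act : ∀ i ∈ J₀, g i xstar = 0 := by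
    intro i hi
    have := hJ₀S hi
    rw [hS, Finset.mem_filter] at this
    exact this.2
  set Vf : E n → ((↥I₁ ⊕ ↥I₂) ⊕ ↥J₀) → E n :=
    fun x => Sum.elim (F x) (fun j : ↥J₀ => Gg x j.1) with hVf
  set ρ : ℕ → ((↥I₁ ⊕ ↥I₂) ⊕ ↥J₀) → ℝ :=
    fun k => Sum.elim (cseq k) (fun j => lamseq k j.1) with hρ
  have hrepn : ∀ k, dk (φ k) = ∑ i, ρ k i • Vf (xk (φ k)) i := by
    intro k
    rw [Fintype.sum_sum_type]
    simp only [hρ, hVf, Sum.elim_inl, Sum.elim_inr]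
    rw [sum_subtype_ext J₀ (fun i => lamseq k i • Gg (xk (φ k)) i)
      (fun i hi => by show lamseq k i • Gg (xk (φ k)) i = 0
                      rw [hlamsupp k i hi, zero_smul])]
    exact hsum k
  set τ : ℕ → ℝ := fun k => (1 + ‖ρ k‖)⁻¹ with hτ
  set σ : ℕ → ((↥I₁ ⊕ ↥I₂) ⊕ ↥J₀) → ℝ := fun k => τ k • ρ k with hσ
  have hnorm_pos : ∀ k, (0:ℝ) < 1 + ‖ρ k‖ := fun k => by positivity
  have hτpos : ∀ k, 0 < τ k := fun k => inv_pos.mpr (hnorm_pos k)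
  have hτle : ∀ k, τ k ≤ 1 := by
    intro k
    show (1 + ‖ρ k‖)⁻¹ ≤ 1
    rw [inv_le_one₀ (hnorm_pos k)]
    linarith [norm_nonneg (ρ k)]
  have hσnorm : ∀ k, ‖σ k‖ = 1 - τ k := by
    intro k
    rw [hσ]
    show ‖τ k • ρ k‖ = 1 - τ k
    rw [norm_smul, Real.norm_eq_abs, abs_of_pos (hτpos k), hτ]
    have := hnorm_pos k
    field_simp
    ring
  have hbdd : ∀ k, ((σ k, τ k) : ((↥I₁ ⊕ ↥I₂) ⊕ ↥J₀ → ℝ) × ℝ) ∈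
      Metric.closedBall (0 : ((↥I₁ ⊕ ↥I₂) ⊕ ↥J₀ → ℝ) × ℝ) 1 := by
    intro k
    rw [mem_closedBall_zero_iff, Prod.norm_def]
    apply max_le
    · rw [hσnorm k]
      linarith [hτpos k]
    · rw [Real.norm_eq_abs, abs_of_pos (hτpos k)]
      exact hτle k
  obtain ⟨⟨siglim, taulim⟩, _, ψ, hψmono, hψconv⟩ :=
    tendsto_subseq_of_bounded Metric.isBounded_closedBall hbdd
  have hσconv : Tendsto (fun k => σ (ψ k)) atTop (𝓝 siglim) :=
    (continuous_fst.tendsto _).comp hψconv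
  have hτconv : Tendsto (fun k => τ (ψ k)) atTop (𝓝 taulim) :=
    (continuous_snd.tendsto _).comp hψconv
  have hxconv : Tendsto (fun k => xk (φ (ψ k))) atTop (𝓝 xstar) :=
    hxk.comp ((hφmono.comp hψmono).tendsto_atTop)
  have hdconv : Tendsto (fun k => dk (φ (ψ k))) atTop (𝓝 d) :=
    hdk.comp ((hφmono.comp hψmono).tendsto_atTop)
  have hVconv : ∀ i, Tendsto (fun k => Vf (xk (φ (ψ k))) i) atTop (𝓝 (Vf xstar i)) := by
    intro i
    have hc : Continuous (fun x => Vf x i) := by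
      rw [hVf]
      rcases i with (⟨i, hi⟩ | ⟨i, hi⟩) | ⟨i, hi⟩
      · exact grad_cont (hh i)
      · exact continuous_const
      · exact grad_cont (hg i)
    exact (hc.tendsto _).comp hxconv
  have hσiconv : ∀ i, Tendsto (fun k => σ (ψ k) i) atTop (𝓝 (siglim i)) := fun i =>
    ((continuous_apply i).tendsto _).comp hσconv
  have hlim1 : Tendsto (fun k => ∑ i, σ (ψ k) i • Vf (xk (φ (ψ k))) i) atTop
      (𝓝 (∑ i, siglim i • Vf xstar i)) :=
    tendsto_finset_sum _ (fun i _ => (hσiconv i).smul (hVconv i))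
  have heqk : ∀ k, ∑ i, σ (ψ k) i • Vf (xk (φ (ψ k))) i = τ (ψ k) • dk (φ (ψ k)) := by
    intro k
    rw [hrepn (ψ k), Finset.smul_sum]
    refine Finset.sum_congr rfl fun i _ => ?_
    rw [hσ]
    show (τ (ψ k) • ρ (ψ k)) i • Vf (xk (φ (ψ k))) i = _
    rw [Pi.smul_apply, smul_eq_mul, mul_smul]
  have hlim2 : Tendsto (fun k => τ (ψ k) • dk (φ (ψ k))) atTop (𝓝 (taulim • d)) :=
    hτconv.smul hdconv
  have hkey : ∑ i, siglim i • Vf xstar i = taulim • d := by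
    have h1 := hlim1
    rw [show (fun k => ∑ i, σ (ψ k) i • Vf (xk (φ (ψ k))) i) =
      (fun k => τ (ψ k) • dk (φ (ψ k))) from funext heqk] at h1
    exact tendsto_nhds_unique h1 hlim2
  have hsiglimpos : ∀ j : ↥J₀, 0 ≤ siglim (Sum.inr j) := by
    intro j
    apply ge_of_tendsto' (hσiconv (Sum.inr j))
    intro k
    rw [hσ]
    show 0 ≤ (τ (ψ k) • ρ (ψ k)) (Sum.inr j)
    rw [Pi.smul_apply, smul_eq_mul]
    exact mul_nonneg (hτpos _).le (by rw [hρ]; exact hlam0 _ _)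
  have htaulim0 : 0 ≤ taulim := ge_of_tendsto' hτconv (fun k => (hτpos _).le)
  have hsiglimnorm : ‖siglim‖ = 1 - taulim := by
    have h1 : Tendsto (fun k => ‖σ (ψ k)‖) atTop (𝓝 ‖siglim‖) :=
      (continuous_norm.tendsto _).comp hσconv
    have h2 : Tendsto (fun k => 1 - τ (ψ k)) atTop (𝓝 (1 - taulim)) :=
      tendsto_const_nhds.sub hτconv
    refine tendsto_nhds_unique ?_ h2
    rw [show (fun k => (1:ℝ) - τ (ψ k)) = (fun k => ‖σ (ψ k)‖) from
      funext (fun k => (hσnorm (ψ k)).symm)]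
    exact h1
  by_cases hτz : taulim = 0
  · -- contradiction via SP-RCPLD (ii)
    exfalso
    rw [hτz, zero_smul] at hkey
    have hsiglimne : siglim ≠ 0 := by
      intro hz
      rw [hz, hτz] at hsiglimnorm
      simp at hsiglimnorm
    set mu : Fin q → ℝ := fun i =>
      if hi : i ∈ I₁ then siglim (Sum.inl (Sum.inl ⟨i, hi⟩)) else 0 with hmu
    set gam : Fin n → ℝ := fun i =>
      if hi : i ∈ I₂ then siglim (Sum.inl (Sum.inr ⟨i, hi⟩)) else 0 with hgamd
    set lam : Fin m → ℝ := fun i =>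
      if hi : i ∈ J₀ then siglim (Sum.inr ⟨i, hi⟩) else 0 with hlamd
    have hsum0 : (∑ i, mu i • gradient (h i) xstar) +
        (∑ i, gam i • (EuclideanSpace.single i (1:ℝ) : E n)) +
        (∑ i, lam i • gradient (g i) xstar) = 0 := by
      have e1 : ∑ i, mu i • gradient (h i) xstar =
          ∑ i : ↥I₁, siglim (Sum.inl (Sum.inl i)) • gradient (h i.1) xstar := by
        rw [← sum_subtype_ext I₁ (fun i => mu i • gradient (h i) xstar)
          (fun i hi => by simp only [hmu, dif_neg hi, zero_smul])]
        refine Finset.sum_congr rfl fun i _ => ?_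
        simp only [hmu, dif_pos i.2, Subtype.coe_eta]
      have e2 : ∑ i, gam i • (EuclideanSpace.single i (1:ℝ) : E n) =
          ∑ i : ↥I₂, siglim (Sum.inl (Sum.inr i)) • (EuclideanSpace.single i.1 (1:ℝ) : E n) := by
        rw [← sum_subtype_ext I₂ (fun i => gam i • (EuclideanSpace.single i (1:ℝ) : E n))
          (fun i hi => by simp only [hgamd, dif_neg hi, zero_smul])]
        refine Finset.sum_congr rfl fun i _ => ?_
        simp only [hgamd, dif_pos i.2, Subtype.coe_eta]
      have e3 : ∑ i, lam i • gradient (g i) xstar =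
          ∑ i : ↥J₀, siglim (Sum.inr i) • gradient (g i.1) xstar := by
        rw [← sum_subtype_ext J₀ (fun i => lam i • gradient (g i) xstar)
          (fun i hi => by simp only [hlamd, dif_neg hi, zero_smul])]
        refine Finset.sum_congr rfl fun i _ => ?_
        simp only [hlamd, dif_pos i.2, Subtype.coe_eta]
      rw [e1, e2, e3, ← hkey]
      rw [Fintype.sum_sum_type, Fintype.sum_sum_type]
      simp only [hVf, hF, Sum.elim_inl, Sum.elim_inr, hGg]
    have hnotall : ¬(mu = 0 ∧ gam = 0 ∧ lam = 0) := by
      rintro ⟨h1, h2, h3⟩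
      apply hsiglimne
      funext j
      rcases j with (a | b) | c
      · have := congrFun h1 a.1
        simp only [hmu] at this
        simpa only [dif_pos a.2, Subtype.coe_eta, Pi.zero_apply] using this
      · have := congrFun h2 b.1
        simp only [hgamd] at this
        simpa only [dif_pos b.2, Subtype.coe_eta, Pi.zero_apply] using this
      · have := congrFun h3 c.1
        simp only [hlamd] at this
        simpa only [dif_pos c.2, Subtype.coe_eta, Pi.zero_apply] using this
    have hnli := hii I₁ I₂ hI₂0 hliStar hspanStar J₀ hJ₀act
      ⟨mu, gam, lam,
        (fun i => by
          simp only [hlamd]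
          split_ifs with hi
          · exact hsiglimpos ⟨i, hi⟩
          · exact le_refl 0),
        (fun i hi => by simp only [hmu, dif_neg hi]),
        (fun i hi => by simp only [hgamd, dif_neg hi]),
        (fun i hi => by simp only [hlamd, dif_neg hi]),
        hnotall, hsum0⟩ (xk (φ (ψ 0))) (hU' (ψ 0))
    apply hnli
    have hcomp : (fun j : (↥I₁ ⊕ ↥I₂ ⊕ ↥J₀) =>
        Sum.elim (fun i : ↥I₁ => gradient (h i.1) (xk (φ (ψ 0))))
          (Sum.elim (fun i : ↥I₂ => (EuclideanSpace.single i.1 (1:ℝ) : E n))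
            (fun i : ↥J₀ => gradient (g i.1) (xk (φ (ψ 0))))) j) ∘
        (Equiv.sumAssoc ↥I₁ ↥I₂ ↥J₀) =
        Sum.elim (F (xk (φ (ψ 0)))) (fun j : ↥J₀ => Gg (xk (φ (ψ 0))) j.1) := by
      funext j
      rcases j with (a | b) | c <;> rfl
    have hli0 := hli (ψ 0)
    rw [← hcomp] at hli0
    exact (linearIndependent_equiv (Equiv.sumAssoc ↥I₁ ↥I₂ ↥J₀)).mp hli0
  · -- taulim > 0 : pass to the limit
    have htaulimpos : 0 < taulim := lt_of_le_of_ne htaulim0 (Ne.symm hτz)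
    set rholim : ((↥I₁ ⊕ ↥I₂) ⊕ ↥J₀) → ℝ := taulim⁻¹ • siglim with hrholim
    have hd : d = ∑ i, rholim i • Vf xstar i := by
      have hc : ∑ i, rholim i • Vf xstar i = taulim⁻¹ • ∑ i, siglim i • Vf xstar i := by
        rw [Finset.smul_sum]
        refine Finset.sum_congr rfl fun i _ => ?_
        rw [hrholim]
        show (taulim⁻¹ • siglim) i • Vf xstar i = _
        rw [Pi.smul_apply, smul_eq_mul, mul_smul]
      rw [hc, hkey, smul_smul, inv_mul_cancel₀ hτz, one_smul]
    refine ⟨fun i => if hi : i ∈ I₁ then rholim (Sum.inl (Sum.inl ⟨i, hi⟩)) else 0,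
            fun i => if hi : i ∈ J₀ then rholim (Sum.inr ⟨i, hi⟩) else 0, ?_, ?_, ?_⟩
    · intro i
      by_cases hi : i ∈ J₀
      · simp only [dif_pos hi, hrholim]
        show 0 ≤ (taulim⁻¹ • siglim) (Sum.inr ⟨i, hi⟩)
        rw [Pi.smul_apply, smul_eq_mul]
        exact mul_nonneg (inv_nonneg.mpr htaulim0) (hsiglimpos ⟨i, hi⟩)
      · simp only [dif_neg hi]; exact le_refl 0
    · intro i hgi
      simp only [dif_neg (fun hi => hgi (hJ₀act i hi))]
    · intro j hj
      have hdj : d j = ((∑ i, rholim i • Vf xstar i : E n)) j := by rw [← hd]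
      rw [hdj, sum_coord]
      rw [Fintype.sum_sum_type, Fintype.sum_sum_type]
      have hz2 : ∑ b : ↥I₂, rholim (Sum.inl (Sum.inr b)) * Vf xstar (Sum.inl (Sum.inr b)) j = 0 := by
        apply Finset.sum_eq_zero
        intro b _
        have hb0 : xstar b.1 = 0 := hI₂0 b.1 b.2
        have hbj : j ≠ b.1 := fun hc => hj (hc ▸ hb0)
        have : Vf xstar (Sum.inl (Sum.inr b)) j = 0 := by
          simp only [hVf, hF, Sum.elim_inl, Sum.elim_inr]
          rw [EuclideanSpace.single_apply, if_neg hbj]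
        rw [this, mul_zero]
      rw [hz2, add_zero]
      have e1 : ∑ i, (if hi : i ∈ I₁ then rholim (Sum.inl (Sum.inl ⟨i, hi⟩)) else 0) *
          gradient (h i) xstar j =
          ∑ a : ↥I₁, rholim (Sum.inl (Sum.inl a)) * Vf xstar (Sum.inl (Sum.inl a)) j := by
        rw [← sum_subtype_ext I₁ (fun i => (if hi : i ∈ I₁ then
          rholim (Sum.inl (Sum.inl ⟨i, hi⟩)) else 0) * gradient (h i) xstar j)
          (fun i hi => by simp only [dif_neg hi, zero_mul])]
        refine Finset.sum_congr rfl fun a _ => ?_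
        simp only [dif_pos a.2, Subtype.coe_eta, hVf, hF, Sum.elim_inl]
      have e3 : ∑ i, (if hi : i ∈ J₀ then rholim (Sum.inr ⟨i, hi⟩) else 0) *
          gradient (g i) xstar j =
          ∑ c : ↥J₀, rholim (Sum.inr c) * Vf xstar (Sum.inr c) j := by
        rw [← sum_subtype_ext J₀ (fun i => (if hi : i ∈ J₀ then
          rholim (Sum.inr ⟨i, hi⟩) else 0) * gradient (g i) xstar j)
          (fun i hi => by simp only [dif_neg hi, zero_mul])]
        refine Finset.sum_congr rfl fun c _ => ?_
        simp only [dif_pos c.2, Subtype.coe_eta, hVf, hGg, Sum.elim_inr]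
      rw [e1, e3]
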